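/- Let μ > 0 and let ω : ℝ → ℝ be continuous with ω(0) = 0 and sublinear growth, i.e. |ω(t)|/|t| → 0 as |t| → ∞. Define z(t) := −μ ∫_{−∞}^0 e^{μs} (ω(t+s) − ω(t)) ds (the integral converging absolutely). Then z is continuous on ℝ and satisfies the pathwise Ornstein–Uhlenbeck identity z(t) = z(0) − μ ∫₀^t z(s) ds + ω(t) for all t ∈ ℝ; that is, z is a stationary (with respect to the shift θ_tω(·) = ω(·+t) − ω(t)) solution of dz + μz dt = dω. -/

import Mathlib

open MeasureTheory Set Filter

private lemma aux_tendsto15 (C b : ℝ) (hb : 0 < b) :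
    Tendsto (fun x : ℝ => (C + x) * Real.exp (-b * x)) atTop (nhds 0) := by
  have h1 : Tendsto (fun x : ℝ => Real.exp (-b * x)) atTop (nhds 0) :=
    Real.tendsto_exp_atBot.comp (tendsto_id.const_mul_atTop_of_neg (neg_neg_iff_pos.2 hb))
  have h2 : Tendsto (fun x : ℝ => x * Real.exp (-b * x)) atTop (nhds 0) := by
    simpa using tendsto_rpow_mul_exp_neg_mul_atTop_nhds_zero 1 b hb
  have := (h1.const_mul C).add h2
  simp only [mul_zero, add_zero] at this
  refine this.congr fun x => by ring

private lemma aux_integrable15 {b : ℝ} (hb : 0 < b) (C : ℝ) (f : ℝ → ℝ) (hf : Continuous f)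
    (hB : ∀ u, |f u| ≤ (C + |u|) * Real.exp (b * u)) (t : ℝ) :
    IntegrableOn f (Iic t) := by
  have hb2 : (0:ℝ) < b / 2 := by linarith
  have hI : IntegrableOn (fun x => f (-x)) (Ioi (-t)) := by
    apply integrable_of_isBigO_exp_neg hb2 ((hf.comp continuous_neg).continuousOn)
    rw [Asymptotics.isBigO_iff]
    refine ⟨1, ?_⟩
    filter_upwards [(aux_tendsto15 C (b/2) hb2).eventually_lt_const zero_lt_one,
      eventually_ge_atTop (0:ℝ)] with x h1 h2
    rw [Real.norm_eq_abs, Real.norm_eq_abs, one_mul, Real.abs_exp]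
    have he : Real.exp (-(b/2) * x) * Real.exp (-(b/2) * x) = Real.exp (b * (-x)) := by
      rw [← Real.exp_add]; congr 1; ring
    have hb1 := hB (-x)
    rw [abs_neg, abs_of_nonneg h2] at hb1
    have h3 : (C + x) * Real.exp (b * (-x)) ≤ Real.exp (-(b/2) * x) := by
      nlinarith [mul_lt_mul_of_pos_right h1 (Real.exp_pos (-(b/2) * x)),
        Real.exp_pos (-(b/2) * x)]
    show |f (-x)| ≤ Real.exp (-(b/2) * x)
    linarith
  have h2 := ((Measure.measurePreserving_neg (volume : Measure ℝ)).integrableOn_comp_preimage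
      (Homeomorph.neg ℝ).measurableEmbedding (f := fun x => f (-x))
      (s := Ici (-t))).mpr ((integrableOn_Ici_iff_integrableOn_Ioi).mpr hI)
  simpa [Function.comp_def, neg_preimage, neg_Ici, neg_neg] using h2

/-- pathwise Ornstein–Uhlenbeck identity for the stationary solution
`z(t) = -μ ∫_{-∞}^0 e^{μ s} (θ_t ω)(s) ds`, where `θ_t ω (·) = ω(·+t) - ω(t)` is the
Wiener shift.  For a continuous path `ω` with `ω 0 = 0` and sublinear growth, `z` is
continuous (the integral converging absolutely) and satisfies
`z(t) = z(0) - μ ∫₀^t z(s) ds + ω(t)` for all `t`. -/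
theorem stmt15 (μ : ℝ) (hμ : 0 < μ) (ω : ℝ → ℝ) (hcont : Continuous ω) (h0 : ω 0 = 0)
    (hsub : Tendsto (fun t => |ω t| / |t|) (cocompact ℝ) (nhds 0))
    (z : ℝ → ℝ)
    (hz : ∀ t, z t = -μ * ∫ s in Iic (0:ℝ), Real.exp (μ * s) * (ω (t + s) - ω t)) :
    (∀ t, IntegrableOn (fun s => Real.exp (μ * s) * (ω (t + s) - ω t)) (Iic (0:ℝ))) ∧
      Continuous z ∧
      ∀ t : ℝ, z t = z 0 - μ * (∫ s in (0:ℝ)..t, z s) + ω t := by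
  -- Step 1 : a global linear bound on ω
  obtain ⟨K, hKc, hKs⟩ := mem_cocompact.mp (hsub.eventually_lt_const zero_lt_one)
  obtain ⟨C0, hC0⟩ := hKc.exists_bound_of_continuousOn hcont.continuousOn
  set C : ℝ := max C0 0 with hCdef
  have hbound : ∀ u, |ω u| ≤ C + |u| := by
    intro u
    by_cases hu : u ∈ K
    · have := hC0 u hu
      have : |ω u| ≤ C0 := this
      have h2 : C0 ≤ C := le_max_left _ _
      have := abs_nonneg u
      linarith
    · have hu' : |ω u| / |u| < 1 := hKs hu
      rcases eq_or_ne u 0 with rfl | hne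
      · simp [h0, le_max_right C0 0, hCdef]
      · have habs : (0:ℝ) < |u| := abs_pos.mpr hne
        have : |ω u| < |u| := (div_lt_one habs).mp hu'
        have hC : (0:ℝ) ≤ C := le_max_right _ _
        linarith
  -- Step 2 : the auxiliary function g and its integrability
  set g : ℝ → ℝ := fun u => Real.exp (μ * u) * ω u with hgdef
  have hg : Continuous g := by fun_prop
  have hgint : ∀ t, IntegrableOn g (Iic t) := by
    refine aux_integrable15 hμ C g hg (fun u => ?_)
    have := hbound u
    have h1 : |g u| = Real.exp (μ * u) * |ω u| := by
      rw [hgdef]; simp [abs_mul, Real.abs_exp]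
    rw [h1, mul_comm]
    exact mul_le_mul_of_nonneg_right this (Real.exp_pos _).le
  -- integrability of the pieces of the defining integral
  have hA : ∀ t, IntegrableOn (fun s => Real.exp (μ * s) * ω (t + s)) (Iic (0:ℝ)) := by
    intro t
    refine aux_integrable15 hμ (C + |t|) (fun s => Real.exp (μ * s) * ω (t + s))
      (by fun_prop) (fun u => ?_) 0
    have h1 : |Real.exp (μ * u) * ω (t + u)| = Real.exp (μ * u) * |ω (t + u)| := by
      simp [abs_mul, Real.abs_exp]
    have h2 : |ω (t + u)| ≤ C + |t| + |u| := by
      have := hbound (t + u)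
      have h3 : |t + u| ≤ |t| + |u| := abs_add_le t u
      linarith
    rw [h1, mul_comm]
    refine mul_le_mul_of_nonneg_right ?_ (Real.exp_pos _).le
    linarith
  have hB : ∀ t, IntegrableOn (fun s => Real.exp (μ * s) * ω t) (Iic (0:ℝ)) := by
    intro t
    refine aux_integrable15 hμ |ω t| (fun s => Real.exp (μ * s) * ω t)
      (by fun_prop) (fun u => ?_) 0
    have h1 : |Real.exp (μ * u) * ω t| = Real.exp (μ * u) * |ω t| := by
      simp [abs_mul, Real.abs_exp]
    rw [h1, mul_comm]
    refine mul_le_mul_of_nonneg_right ?_ (Real.exp_pos _).le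
    have := abs_nonneg u; linarith
  have hint : ∀ t, IntegrableOn (fun s => Real.exp (μ * s) * (ω (t + s) - ω t)) (Iic (0:ℝ)) := by
    intro t
    have := (hA t).sub (hB t)
    convert this using 1; ext s; simp only [Pi.sub_apply]; ring
  -- Step 3 : the functions F and G
  set F : ℝ → ℝ := fun t => ∫ u in Iic t, g u with hFdef
  set G : ℝ → ℝ := fun t => Real.exp (-(μ * t)) * F t with hGdef
  -- shift identity
  have hshift : ∀ t, (∫ s in Iic (0:ℝ), g (s + t)) = F t := by
    intro t
    have hset : (fun x : ℝ => x + t) ⁻¹' Iic t = Iic 0 := by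
      ext x; simp
    have := (measurePreserving_add_right (volume : Measure ℝ) t).setIntegral_preimage_emb
      (Homeomorph.addRight t).measurableEmbedding g (Iic t)
    rw [hset] at this
    exact this
  -- value of the exponential integral
  have hexp : (∫ s in Iic (0:ℝ), Real.exp (μ * s)) = μ⁻¹ := by
    have h1 : (∫ s in Iic (0:ℝ), Real.exp (μ * s))
        = ∫ x in Ioi (-(0:ℝ)), Real.exp (-(μ * x)) := by
      rw [← integral_comp_neg_Iic]
      congr 1; ext x; congr 1; ring
    rw [h1, neg_zero]
    have h2 : (∫ x in Ioi (0:ℝ), Real.exp (-(μ * x)))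
        = ∫ x in Ioi (0:ℝ), (fun y => Real.exp (-y)) (μ * x) := by
      congr 1
    rw [h2, integral_comp_mul_left_Ioi (fun y => Real.exp (-y)) 0 hμ, mul_zero,
      integral_exp_neg_Ioi_zero, smul_eq_mul, mul_one]
  -- Step 4 : the closed formula for z
  have hzG : ∀ t, z t = ω t - μ * G t := by
    intro t
    have hsplit : (∫ s in Iic (0:ℝ), Real.exp (μ * s) * (ω (t + s) - ω t))
        = (∫ s in Iic (0:ℝ), Real.exp (μ * s) * ω (t + s))
          - ∫ s in Iic (0:ℝ), Real.exp (μ * s) * ω t := by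
      rw [← integral_sub (hA t) (hB t)]
      congr 1; ext s; ring
    have h1 : (∫ s in Iic (0:ℝ), Real.exp (μ * s) * ω (t + s))
        = Real.exp (-(μ * t)) * F t := by
      rw [← hshift t, ← integral_const_mul]
      congr 1; ext s
      rw [hgdef]
      simp only
      rw [show Real.exp (-(μ * t)) * (Real.exp (μ * (s + t)) * ω (s + t))
          = Real.exp (-(μ * t) + μ * (s + t)) * ω (s + t) by rw [Real.exp_add]; ring,
        show -(μ * t) + μ * (s + t) = μ * s by ring, add_comm t s]
    have h2 : (∫ s in Iic (0:ℝ), Real.exp (μ * s) * ω t)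
        = μ⁻¹ * ω t := by
      rw [← hexp, ← integral_mul_const]
    rw [hz t, hsplit, h1, h2, hGdef]
    simp only
    field_simp
    ring
  -- Step 5 : differentiability of F and G
  have hF0 : ∀ t, F t = F 0 + ∫ u in (0:ℝ)..t, g u := by
    intro t
    have := intervalIntegral.integral_Iic_sub_Iic (hgint 0) (hgint t)
    rw [hFdef]; simp only
    linarith [this]
  have hFderiv : ∀ t, HasDerivAt F (g t) t := by
    intro t
    have h := ((hg.integral_hasStrictDerivAt 0 t).hasDerivAt).const_add (F 0)
    exact h.congr_of_eventuallyEq (Eventually.of_forall fun x => (hF0 x))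
  have hGderiv : ∀ t, HasDerivAt G (z t) t := by
    intro t
    have he : HasDerivAt (fun t : ℝ => Real.exp (-(μ * t))) (-μ * Real.exp (-(μ * t))) t := by
      have h1 : HasDerivAt (fun t : ℝ => -(μ * t)) (-μ) t := by
        exact ((hasDerivAt_id t).const_mul μ).neg.congr_deriv (by simp)
      simpa [mul_comm] using h1.exp
    have h := he.mul (hFderiv t)
    rw [hGdef]
    refine h.congr_deriv ?_
    symm
    rw [hzG t, hGdef, hgdef]
    simp only
    have hcancel : Real.exp (-(μ * t)) * Real.exp (μ * t) = 1 := by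
      rw [← Real.exp_add]; simp
    linear_combination (-(ω t)) * hcancel
  -- continuity of z
  have hzc : Continuous z := by
    have hFc : Continuous F := continuous_iff_continuousAt.mpr fun t => (hFderiv t).continuousAt
    have hGc : Continuous G := (Real.continuous_exp.comp
      ((continuous_const.mul continuous_id).neg)).mul hFc
    have : Continuous fun t => ω t - μ * G t := hcont.sub (continuous_const.mul hGc)
    exact (funext hzG : z = fun t => ω t - μ * G t) ▸ this
  refine ⟨hint, hzc, fun t => ?_⟩
  -- Step 6 : the integral identity
  have hI : (∫ s in (0:ℝ)..t, z s) = G t - G 0 :=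
    intervalIntegral.integral_eq_sub_of_hasDerivAt (fun s _ => hGderiv s)
      (hzc.intervalIntegrable 0 t)
  have hz0 : z 0 = -μ * G 0 := by rw [hzG 0, h0]; ring
  rw [hI, hzG t, hz0]
  ring
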